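/- Let T be a nonnegative real m×m matrix all of whose eigenvalues have absolute value strictly less than 1. Then there exist a constant γ > 0 and a vector α ∈ ℝ^m with all entries strictly positive and ‖α‖₁ = 1 such that T·α ≤ (1−γ)·α coordinatewise. -/

import Mathlib

open Polynomial Matrix Filter

attribute [local instance] Matrix.linftyOpNormedAddCommGroup Matrix.linftyOpNormedRing
  Matrix.linftyOpNormedAlgebra

/-- Spectrum elements are charpoly roots. -/
lemma aux_isRoot {k : ℕ} (A : Matrix (Fin k) (Fin k) ℂ) {z : ℂ} (hz : z ∈ spectrum ℂ A) :
    A.charpoly.IsRoot z := by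
  rw [spectrum.mem_iff, Matrix.isUnit_iff_isUnit_det, isUnit_iff_ne_zero, not_not] at hz
  have key : (charmatrix A).map (evalRingHom z) = algebraMap ℂ _ z - A := by
    ext i j
    by_cases h : i = j <;>
      simp [h, charmatrix_apply, Matrix.algebraMap_matrix_apply, Matrix.diagonal_apply,
        Matrix.sub_apply, Matrix.one_apply]
  have h2 : A.charpoly.eval z = (algebraMap ℂ (Matrix (Fin k) (Fin k) ℂ) z - A).det := by
    rw [Matrix.charpoly, ← key, ← RingHom.mapMatrix_apply, ← RingHom.map_det]; rfl
  rwa [Polynomial.IsRoot, h2]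

/-- Entries of powers of entrywise-nonneg matrices are nonneg. -/
lemma aux_pow_nonneg {k : ℕ} (T : Matrix (Fin k) (Fin k) ℝ) (hT : ∀ i j, 0 ≤ T i j) :
    ∀ N i j, 0 ≤ (T ^ N) i j := by
  intro N
  induction N with
  | zero => intro i j; by_cases h : i = j <;> simp [Matrix.one_apply, h]
  | succ n ih =>
    intro i j
    rw [pow_succ, Matrix.mul_apply]
    exact Finset.sum_nonneg fun l _ => mul_nonneg (ih i l) (hT l j)

/-- Small power: there is `N ≥ 1` with all row sums of `T ^ N` at most `1/2`. -/
lemma aux_small_pow {k : ℕ} (T : Matrix (Fin k) (Fin k) ℝ) (hT : ∀ i j, 0 ≤ T i j)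
    (heig : ∀ z : ℂ, (T.charpoly.map (algebraMap ℝ ℂ)).IsRoot z → ‖z‖ < 1) :
    ∃ N : ℕ, 1 ≤ N ∧ ∀ i, ∑ j, (T ^ N) i j ≤ 1 / 2 := by
  classical
  set f := algebraMap ℝ ℂ
  set A : Matrix (Fin k) (Fin k) ℂ := T.map f with hA
  haveI : CompleteSpace (Matrix (Fin k) (Fin k) ℂ) := FiniteDimensional.complete ℂ _
  -- spectral radius < 1
  have hroots : ∀ z ∈ spectrum ℂ A, ‖z‖₊ < 1 := by
    intro z hz
    have := heig z (by rw [← Matrix.charpoly_map]; exact aux_isRoot A hz)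
    have h1 : ‖z‖ < 1 := by exact this
    exact_mod_cast h1
  have hρ : spectralRadius ℂ A < 1 := by
    set r : NNReal := A.charpoly.roots.toFinset.sup (fun z => ‖z‖₊) with hr
    have hr1 : r < 1 := by
      rw [hr, Finset.sup_lt_iff (by norm_num : (⊥ : NNReal) < 1)]
      intro z hz
      have hzr : A.charpoly.IsRoot z := by
        have := Multiset.mem_toFinset.1 hz
        exact isRoot_of_mem_roots this
      have : (T.charpoly.map (algebraMap ℝ ℂ)).IsRoot z := by
        rwa [← Matrix.charpoly_map]
      have h1 := heig z this
      have h1' : ‖z‖ < 1 := by exact h1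
      exact_mod_cast h1'
    refine lt_of_le_of_lt ?_ (show ((r : ENNReal)) < 1 by exact_mod_cast hr1)
    rw [spectralRadius]
    refine iSup₂_le fun z hz => ?_
    refine ENNReal.coe_le_coe.2 (Finset.le_sup (Multiset.mem_toFinset.2 ?_))
    exact (mem_roots A.charpoly_monic.ne_zero).2 (aux_isRoot A hz)
  -- Gelfand's formula: find n ≥ 1 with ‖A ^ n‖₊ < 1
  have hgel := spectrum.pow_nnnorm_pow_one_div_tendsto_nhds_spectralRadius A
  have hev : ∀ᶠ n : ℕ in atTop, (‖A ^ n‖₊ : ENNReal) ^ (1 / (n : ℝ)) < 1 :=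
    hgel.eventually_lt_const hρ
  obtain ⟨n, hn1, hn⟩ := ((eventually_ge_atTop 1).and hev).exists
  have hcn : ‖A ^ n‖₊ < 1 := by
    by_contra hcon
    push_neg at hcon
    have h1 : (1 : ENNReal) ≤ (‖A ^ n‖₊ : ENNReal) ^ (1 / (n : ℝ)) := by
      calc (1 : ENNReal) = 1 ^ (1 / (n : ℝ)) := (ENNReal.one_rpow _).symm
        _ ≤ (‖A ^ n‖₊ : ENNReal) ^ (1 / (n : ℝ)) := by
            apply ENNReal.rpow_le_rpow (by exact_mod_cast hcon)
            positivity
    exact absurd hn (not_lt.2 h1)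
  -- choose k with ‖A ^ n‖ ^ k ≤ 1/2
  set c : ℝ := ‖A ^ n‖ with hc
  have hc0 : 0 ≤ c := norm_nonneg _
  have hc1 : c < 1 := by exact_mod_cast hcn
  obtain ⟨kk, hk⟩ := ((tendsto_pow_atTop_nhds_zero_of_lt_one hc0 hc1).eventually_lt_const
    (by norm_num : (0:ℝ) < 1/2)).exists
  refine ⟨n * kk.succ, Nat.one_le_iff_ne_zero.2 (by positivity), fun i => ?_⟩
  -- norm bound on A ^ (n * kk.succ)
  have hnormle : ‖A ^ (n * kk.succ)‖ ≤ 1 / 2 := by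
    have h2 : ‖A ^ (n * kk.succ)‖ ≤ c ^ kk.succ := by
      rw [pow_mul]
      exact norm_pow_le' _ (Nat.succ_pos _)
    have h3 : c ^ kk.succ ≤ c ^ kk := pow_le_pow_of_le_one hc0 hc1.le (Nat.le_succ _)
    linarith [hk]
  set N := n * kk.succ
  -- row sums of T ^ N are bounded by ‖A ^ N‖
  have hmap : A ^ N = (T ^ N).map f := by
    rw [hA, ← RingHom.mapMatrix_apply, ← map_pow, RingHom.mapMatrix_apply]
  have hrow : ∑ j, (T ^ N) i j ≤ ‖A ^ N‖ := by
    have h4 : ∑ j, (T ^ N) i j = ∑ j, ‖(A ^ N) i j‖ := by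
      refine Finset.sum_congr rfl fun j _ => ?_
      rw [hmap]
      simp only [Matrix.map_apply]
      have hfr : f ((T ^ N) i j) = (((T ^ N) i j : ℝ) : ℂ) := rfl
      rw [hfr, Complex.norm_real, Real.norm_eq_abs,
        abs_of_nonneg (aux_pow_nonneg T hT N i j)]
    rw [h4, Matrix.linfty_opNorm_def]
    have h5 : (∑ j, ‖(A ^ N) i j‖₊) ≤ (Finset.univ : Finset (Fin k)).sup
        fun i => ∑ j, ‖(A ^ N) i j‖₊ :=
      Finset.le_sup (f := fun i => ∑ j, ‖(A ^ N) i j‖₊) (Finset.mem_univ i)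
    calc ∑ j, ‖(A ^ N) i j‖ = ((∑ j, ‖(A ^ N) i j‖₊ : NNReal) : ℝ) := by
          push_cast; rfl
      _ ≤ _ := by exact_mod_cast h5
  linarith

/-- A nonnegative real matrix all of whose complex eigenvalues have modulus `< 1`
admits a strictly positive vector `α` with `‖α‖₁ = 1` and `T·α ≤ (1−γ)·α`
coordinatewise, for some `γ > 0`. -/
theorem stmt6 {m : ℕ} (hm : 0 < m) (T : Matrix (Fin m) (Fin m) ℝ)
    (hT : ∀ i j, 0 ≤ T i j)
    (heig : ∀ z : ℂ, (T.charpoly.map (algebraMap ℝ ℂ)).IsRoot z → ‖z‖ < 1) :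
    ∃ γ : ℝ, 0 < γ ∧ ∃ α : Fin m → ℝ, (∀ i, 0 < α i) ∧ (∑ i, |α i|) = 1 ∧
      ∀ i, T.mulVec α i ≤ (1 - γ) * α i := by
  classical
  obtain ⟨N, hN1, hN⟩ := aux_small_pow T hT heig
  set v : Fin m → ℝ := fun _ => 1 with hv
  set B : Matrix (Fin m) (Fin m) ℝ := ∑ p ∈ Finset.range N, T ^ p with hB
  set β : Fin m → ℝ := B.mulVec v with hβ
  set w : Fin m → ℝ := (T ^ N).mulVec v with hwdef
  have hpow := aux_pow_nonneg T hT
  -- β ≥ 1 entrywise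
  have hβ1 : ∀ i, 1 ≤ β i := by
    intro i
    have h1 : β i = ∑ p ∈ Finset.range N, ∑ j, (T ^ p) i j := by
      simp only [hβ, hB, Matrix.mulVec, dotProduct, hv, mul_one, Matrix.sum_apply]
      rw [Finset.sum_comm]
    rw [h1]
    have h0 : ∑ j, (T ^ 0) i j = 1 := by simp [Matrix.one_apply]
    calc (1:ℝ) = ∑ j, (T ^ 0) i j := h0.symm
      _ ≤ ∑ p ∈ Finset.range N, ∑ j, (T ^ p) i j :=
          Finset.single_le_sum (f := fun p => ∑ j, (T ^ p) i j)
            (fun p _ => Finset.sum_nonneg fun j _ => hpow p i j)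
            (Finset.mem_range.2 hN1)
  -- key matrix identity
  have hTB : T * B = B + T ^ N - 1 := by
    rw [hB, Finset.mul_sum]
    have h2 : ∑ p ∈ Finset.range N, T * T ^ p = ∑ p ∈ Finset.range N, T ^ (p + 1) := by
      refine Finset.sum_congr rfl fun p _ => (pow_succ' T p).symm
    rw [h2]
    have h3 := Finset.sum_range_succ' (fun p => T ^ p) N
    have h4 := Finset.sum_range_succ (fun p => T ^ p) N
    rw [h4] at h3
    -- h3 : ∑ range N, T^p + T^N = ∑ range N, T^(p+1) + T^0
    rw [pow_zero] at h3
    rw [eq_sub_iff_add_eq]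
    exact h3.symm
  have hTβ : ∀ i, T.mulVec β i = β i + w i - 1 := by
    intro i
    have h5 : T.mulVec β = fun i => β i + w i - v i := by
      rw [hβ, Matrix.mulVec_mulVec, hTB]
      funext i
      rw [Matrix.sub_mulVec, Matrix.add_mulVec, Matrix.one_mulVec]
      simp [hwdef]
    rw [h5]
  have hw0 : ∀ i, 0 ≤ w i := by
    intro i
    have h : w i = ∑ j, (T ^ N) i j := by
      simp [hwdef, Matrix.mulVec, dotProduct, hv]
    rw [h]
    exact Finset.sum_nonneg fun j _ => hpow N i j
  have hwhalf : ∀ i, w i ≤ 1 / 2 := by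
    intro i
    have : w i = ∑ j, (T ^ N) i j := by
      simp [hwdef, Matrix.mulVec, dotProduct, hv]
    rw [this]; exact hN i
  -- the max of β
  have hne : (Finset.univ : Finset (Fin m)).Nonempty := ⟨⟨0, hm⟩, Finset.mem_univ _⟩
  set M : ℝ := Finset.univ.sup' hne β with hM
  have hMβ : ∀ i, β i ≤ M := fun i => Finset.le_sup' β (Finset.mem_univ i)
  have hM1 : 1 ≤ M := le_trans (hβ1 ⟨0, hm⟩) (hMβ ⟨0, hm⟩)
  have hM0 : 0 < M := lt_of_lt_of_le one_pos hM1
  set γ : ℝ := 1 / (2 * M) with hγ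
  have hγ0 : 0 < γ := by positivity
  have hkey : ∀ i, T.mulVec β i ≤ (1 - γ) * β i := by
    intro i
    have h6 : β i * γ ≤ 1 / 2 := by
      rw [hγ, mul_one_div, div_le_div_iff₀ (by positivity) two_pos]
      nlinarith [hMβ i]
    have h7 : T.mulVec β i ≤ β i - 1 / 2 := by
      rw [hTβ i]; linarith [hwhalf i]
    nlinarith
  -- normalize
  set S : ℝ := ∑ i, β i with hS
  have hS0 : 0 < S :=
    Finset.sum_pos (fun i _ => lt_of_lt_of_le one_pos (hβ1 i)) hne
  refine ⟨γ, hγ0, fun i => β i / S,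
    fun i => div_pos (lt_of_lt_of_le one_pos (hβ1 i)) hS0, ?_, ?_⟩
  · have : ∀ i, |β i / S| = β i / S := fun i =>
      abs_of_pos (div_pos (lt_of_lt_of_le one_pos (hβ1 i)) hS0)
    simp_rw [this, ← Finset.sum_div]
    exact div_self hS0.ne'
  · intro i
    have h8 : T.mulVec (fun i => β i / S) i = T.mulVec β i / S := by
      have h9 : (fun i => β i / S) = S⁻¹ • β := by
        funext i; simp [div_eq_inv_mul, smul_eq_mul]
      rw [h9, Matrix.mulVec_smul]
      simp [div_eq_inv_mul, smul_eq_mul]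
    show T.mulVec (fun i => β i / S) i ≤ (1 - γ) * (β i / S)
    rw [h8]
    calc T.mulVec β i / S ≤ (1 - γ) * β i / S :=
          (div_le_div_iff_of_pos_right hS0).2 (hkey i)
      _ = (1 - γ) * (β i / S) := mul_div_assoc _ _ _
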